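/- For natural numbers M ≥ 1, n, and q with 0 ≤ q ≤ M-1, one has (Mn+q)! = M^{Mn} · q! · ∏_{β=0}^{M-1} ((q+β+1)/M)_n, as an identity of rational numbers. -/

import Mathlib

lemma fac_add_prod (a M : ℕ) :
    ((a + M).factorial : ℚ) = (a.factorial : ℚ) * ∏ β ∈ Finset.range M, ((a : ℚ) + β + 1) := by
  induction M with
  | zero => simp
  | succ m ih =>
      rw [Finset.prod_range_succ, ← mul_assoc, ← ih, ← Nat.add_assoc, Nat.factorial_succ]
      push_cast
      ring

theorem factorial_M_n_plus_q (M n q : ℕ) (hM : 1 ≤ M) (hq : q ≤ M - 1) :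
    ((M * n + q).factorial : ℚ) =
      (M : ℚ) ^ (M * n) * (q.factorial : ℚ) *
        ∏ β ∈ Finset.range M,
          (ascPochhammer ℚ n).eval (((q : ℚ) + (β : ℚ) + 1) / (M : ℚ)) := by
  have hM0 : (M : ℚ) ≠ 0 := by positivity
  induction n with
  | zero => simp
  | succ n ih =>
      have h1 : M * (n + 1) + q = (M * n + q) + M := by ring
      rw [h1, fac_add_prod, ih]
      have h2 : ∀ β ∈ Finset.range M,
          (ascPochhammer ℚ (n + 1)).eval (((q : ℚ) + (β : ℚ) + 1) / (M : ℚ)) =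
            (ascPochhammer ℚ n).eval (((q : ℚ) + (β : ℚ) + 1) / (M : ℚ)) *
              ((((q : ℚ) + (β : ℚ) + 1) / (M : ℚ)) + n) := by
        intro β _
        rw [ascPochhammer_succ_eval]
      rw [Finset.prod_congr rfl h2, Finset.prod_mul_distrib]
      have h3 : ∏ β ∈ Finset.range M, ((((q : ℚ) + (β : ℚ) + 1) / (M : ℚ)) + n) =
          (M : ℚ)⁻¹ ^ M * ∏ β ∈ Finset.range M, (((M : ℚ) * n + q) + β + 1) := by
        rw [show ((M : ℚ)⁻¹) ^ M = ∏ _β ∈ Finset.range M, (M : ℚ)⁻¹ by simp, ← Finset.prod_mul_distrib]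
        refine Finset.prod_congr rfl fun β _ => ?_
        field_simp
        ring
      rw [h3]
      have h4 : (M : ℚ) ^ (M * (n + 1)) = (M : ℚ) ^ (M * n) * (M : ℚ) ^ M := by
        rw [← pow_add]; ring_nf
      rw [h4]
      push_cast
      have h5 : (M : ℚ) ^ M * (M : ℚ)⁻¹ ^ M = 1 := by
        rw [← mul_pow, mul_inv_cancel₀ hM0, one_pow]
      linear_combination (-((M : ℚ) ^ (M * n) * (q.factorial : ℚ) *
        (∏ β ∈ Finset.range M, (ascPochhammer ℚ n).eval (((q : ℚ) + (β : ℚ) + 1) / (M : ℚ))) *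
        ∏ β ∈ Finset.range M, (((M : ℚ) * n + q) + β + 1))) * h5
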